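/- Let d ∈ ℕ with d ≥ 1, 1 ≤ p < ∞, and s ∈ ℝ with s > d/p. Then there is a constant c > 0 such that for every g : ℝ^d → ℂ that is continuously differentiable and bounded together with its first-order derivatives and satisfies g(0) = 0, one has ∫_{ℝ^d} ‖z‖^{−sp} |g(z)|^p dz ≤ c · ∫_{ℝ^d} ‖z‖^{(−s+1)p} Σ_{j=1}^d |(∂_j g)(z)|^p dz, where both sides are allowed to be infinite. -/

import Mathlib

open MeasureTheory ENNReal

lemma coord_le_norm {d : ℕ} (z : EuclideanSpace ℝ (Fin d)) (j : Fin d) : |z j| ≤ ‖z‖ := by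
  rw [EuclideanSpace.norm_eq, ← Real.sqrt_sq_eq_abs]
  apply Real.sqrt_le_sqrt
  simp only [Real.norm_eq_abs, sq_abs]
  exact Finset.single_le_sum (f := fun i => z i ^ 2) (fun i _ => sq_nonneg _) (Finset.mem_univ j)

lemma decomp_apply {d : ℕ} (L : EuclideanSpace ℝ (Fin d) →L[ℝ] ℂ) (z : EuclideanSpace ℝ (Fin d)) :
    L z = ∑ j, z j • L (EuclideanSpace.single j 1) := by
  have hz : z = ∑ j, z j • EuclideanSpace.single j (1:ℝ) := by
    ext i
    rw [show ((∑ j, z j • EuclideanSpace.single j (1:ℝ)) i)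
        = ∑ j, (z j • EuclideanSpace.single j (1:ℝ)) i from by rw [WithLp.ofLp_sum, Finset.sum_apply]]
    simp [EuclideanSpace.single_apply]
  calc L z = L (∑ j, z j • EuclideanSpace.single j (1:ℝ)) := by rw [← hz]
  _ = ∑ j, z j • L (EuclideanSpace.single j 1) := by
      rw [map_sum]; simp

lemma rpow_Ioc_lt_top {e : ℝ} (he : -1 < e) :
    ∫⁻ t in Set.Ioc (0:ℝ) 1, ENNReal.ofReal (t ^ e) < ⊤ := by
  have h : IntervalIntegrable (fun t : ℝ => t ^ e) volume 0 1 :=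
    intervalIntegral.intervalIntegrable_rpow' he
  have h2 : IntegrableOn (fun t : ℝ => t ^ e) (Set.Ioc (0:ℝ) 1) volume := by
    simpa [intervalIntegrable_iff_integrableOn_Ioc_of_le (zero_le_one)] using h
  exact h2.lintegral_lt_top

lemma sum_rpow_le {d : ℕ} (hd : d ≠ 0) {p : ℝ} (hp : 1 ≤ p) (b : Fin d → ℝ≥0∞)
    (hb : ∀ j, b j ≠ ⊤) :
    (∑ j, b j) ^ p ≤ (d : ℝ≥0∞) ^ (p - 1) * ∑ j, (b j) ^ p := by
  have hd0 : (d : ℝ≥0∞) ≠ 0 := Nat.cast_ne_zero.2 hd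
  have hdt : (d : ℝ≥0∞) ≠ ⊤ := natCast_ne_top d
  have hw : ∑ _i : Fin d, (d : ℝ≥0∞)⁻¹ = 1 := by
    simp only [Finset.sum_const, Finset.card_univ, Fintype.card_fin, nsmul_eq_mul]
    rw [ENNReal.mul_inv_cancel hd0 hdt]
  have h := ENNReal.rpow_arith_mean_le_arith_mean_rpow Finset.univ
    (fun _ : Fin d => (d : ℝ≥0∞)⁻¹) (fun j => (d : ℝ≥0∞) * b j) hw hp
  have e1 : (∑ j : Fin d, (d : ℝ≥0∞)⁻¹ * ((d:ℝ≥0∞) * b j)) = ∑ j, b j := by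
    apply Finset.sum_congr rfl; intro j _
    rw [← mul_assoc, ENNReal.inv_mul_cancel hd0 hdt, one_mul]
  have e2 : (∑ j : Fin d, (d : ℝ≥0∞)⁻¹ * ((d:ℝ≥0∞) * b j) ^ p)
      = (d : ℝ≥0∞) ^ (p - 1) * ∑ j, (b j) ^ p := by
    rw [Finset.mul_sum]
    apply Finset.sum_congr rfl; intro j _
    rw [ENNReal.mul_rpow_of_ne_top hdt (hb j), ← mul_assoc,
      ENNReal.rpow_sub p 1 hd0 hdt, ENNReal.rpow_one, div_eq_mul_inv, mul_comm ((d:ℝ≥0∞)^p)]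
  rw [e1, e2] at h
  exact h

lemma ftc_bound {d : ℕ} (g : EuclideanSpace ℝ (Fin d) → ℂ) (hg : ContDiff ℝ 1 g)
    (hg0 : g 0 = 0) (z : EuclideanSpace ℝ (Fin d)) :
    ‖g z‖ ≤ ‖z‖ * ∫ t in (0:ℝ)..1, ∑ j, ‖fderiv ℝ g (t • z) (EuclideanSpace.single j 1)‖ := by
  set F : EuclideanSpace ℝ (Fin d) → ℝ := fun w => ∑ j, ‖fderiv ℝ g w (EuclideanSpace.single j 1)‖
    with hF
  have hfc : Continuous (fderiv ℝ g) := hg.continuous_fderiv one_ne_zero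
  have hFc : Continuous F := by
    apply continuous_finset_sum
    intro j _
    exact ((ContinuousLinearMap.apply ℝ ℂ (EuclideanSpace.single j 1)).continuous.comp hfc).norm
  have hderiv : ∀ t : ℝ, HasDerivAt (fun t : ℝ => g (t • z)) (fderiv ℝ g (t • z) z) t := by
    intro t
    have h1 : HasDerivAt (fun t : ℝ => t • z) ((1:ℝ) • z) t := (hasDerivAt_id t).smul_const z
    have h2 : HasFDerivAt g (fderiv ℝ g (t • z)) (t • z) :=
      (hg.differentiable one_ne_zero (t • z)).hasFDerivAt
    have h3 := h2.comp_hasDerivAt t h1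
    rw [one_smul] at h3
    exact h3
  have hcont : Continuous fun t : ℝ => fderiv ℝ g (t • z) z :=
    (ContinuousLinearMap.apply ℝ ℂ z).continuous.comp
      (hfc.comp (continuous_id.smul continuous_const))
  have hint : IntervalIntegrable (fun t : ℝ => fderiv ℝ g (t • z) z) volume 0 1 :=
    hcont.intervalIntegrable 0 1
  have hftc : ∫ t in (0:ℝ)..1, fderiv ℝ g (t • z) z = g z := by
    have := intervalIntegral.integral_eq_sub_of_hasDerivAt
      (f := fun t : ℝ => g (t • z)) (f' := fun t : ℝ => fderiv ℝ g (t • z) z)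
      (fun t _ => hderiv t) hint
    simpa [hg0] using this
  have hbnd : ∀ t : ℝ, ‖fderiv ℝ g (t • z) z‖ ≤ ‖z‖ * F (t • z) := by
    intro t
    rw [decomp_apply]
    calc ‖∑ j, z j • fderiv ℝ g (t • z) (EuclideanSpace.single j 1)‖
        ≤ ∑ j, ‖z j • fderiv ℝ g (t • z) (EuclideanSpace.single j 1)‖ := norm_sum_le _ _
    _ ≤ ∑ j, ‖z‖ * ‖fderiv ℝ g (t • z) (EuclideanSpace.single j 1)‖ := by
        apply Finset.sum_le_sum
        intro j _
        rw [norm_smul]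
        exact mul_le_mul_of_nonneg_right (by simpa using coord_le_norm z j) (norm_nonneg _)
    _ = ‖z‖ * F (t • z) := by rw [hF, Finset.mul_sum]
  calc ‖g z‖ = ‖∫ t in (0:ℝ)..1, fderiv ℝ g (t • z) z‖ := by rw [hftc]
  _ ≤ ∫ t in (0:ℝ)..1, ‖fderiv ℝ g (t • z) z‖ :=
      intervalIntegral.norm_integral_le_integral_norm zero_le_one
  _ ≤ ∫ t in (0:ℝ)..1, ‖z‖ * F (t • z) := by
      apply intervalIntegral.integral_mono_on zero_le_one hint.norm
      · exact (continuous_const.mul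
          (hFc.comp (continuous_id.smul continuous_const))).intervalIntegrable 0 1
      · exact fun t _ => hbnd t
  _ = ‖z‖ * ∫ t in (0:ℝ)..1, F (t • z) := by
      rw [← intervalIntegral.integral_const_mul]

lemma lintegral_comp_smul' {d : ℕ} (f : EuclideanSpace ℝ (Fin d) → ℝ≥0∞)
    (hf : Measurable f) {t : ℝ} (ht : 0 < t) :
    ∫⁻ z, f (t • z) = ENNReal.ofReal (t ^ (-(d:ℝ))) * ∫⁻ w, f w := by
  have hmap := Measure.map_addHaar_smul (volume : Measure (EuclideanSpace ℝ (Fin d))) (ne_of_gt ht)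
  have h1 : ∫⁻ z, f (t • z) = ∫⁻ w, f w ∂(Measure.map (t • ·) volume) :=
    (lintegral_map hf (measurable_const_smul t)).symm
  rw [h1, hmap]
  simp only [lintegral_smul_measure, smul_eq_mul]
  congr 1
  rw [finrank_euclideanSpace_fin]
  rw [abs_of_pos (by positivity), ← Real.rpow_natCast, ← Real.rpow_neg (le_of_lt ht)]

lemma scale_step {d : ℕ} (Φ : EuclideanSpace ℝ (Fin d) → ℝ≥0∞) (hΦ : Measurable Φ)
    (a : ℝ) {t : ℝ} (ht0 : 0 < t) :
    ∫⁻ z, (ENNReal.ofReal ‖z‖) ^ a * Φ (t • z)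
      = ENNReal.ofReal (t ^ (-a - (d:ℝ))) * ∫⁻ w, (ENNReal.ofReal ‖w‖) ^ a * Φ w := by
  set f : EuclideanSpace ℝ (Fin d) → ℝ≥0∞ := fun w => (ENNReal.ofReal (t⁻¹ * ‖w‖)) ^ a * Φ w
    with hf
  have hfm : Measurable f := by
    apply Measurable.mul ?_ hΦ
    exact (measurable_const.mul continuous_norm.measurable).ennreal_ofReal.pow_const a
  have key : ∀ z : EuclideanSpace ℝ (Fin d),
      f (t • z) = (ENNReal.ofReal ‖z‖) ^ a * Φ (t • z) := by
    intro z
    show (ENNReal.ofReal (t⁻¹ * ‖t • z‖)) ^ a * Φ (t • z) = _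
    congr 3
    rw [norm_smul, Real.norm_eq_abs, abs_of_pos ht0, ← mul_assoc, inv_mul_cancel₀ (ne_of_gt ht0),
      one_mul]
  have h2 : ∫⁻ z, f (t • z) = ENNReal.ofReal (t ^ (-(d:ℝ))) * ∫⁻ w, f w :=
    lintegral_comp_smul' f hfm ht0
  simp only [key] at h2
  rw [h2, hf]
  have h3 : ∀ w : EuclideanSpace ℝ (Fin d),
      (ENNReal.ofReal (t⁻¹ * ‖w‖)) ^ a * Φ w
        = ENNReal.ofReal (t⁻¹ ^ a) * ((ENNReal.ofReal ‖w‖) ^ a * Φ w) := by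
    intro w
    rw [ENNReal.ofReal_mul (le_of_lt (inv_pos.2 ht0)),
      ENNReal.mul_rpow_of_ne_top ofReal_ne_top ofReal_ne_top, mul_assoc,
      ENNReal.ofReal_rpow_of_pos (inv_pos.2 ht0)]
  simp only [h3]
  rw [lintegral_const_mul' _ _ ofReal_ne_top, ← mul_assoc, ← ENNReal.ofReal_mul (by positivity)]
  congr 2
  rw [Real.inv_rpow (le_of_lt ht0), ← Real.rpow_neg (le_of_lt ht0), ← Real.rpow_add ht0]
  ring_nf

lemma holder_step {p θ : ℝ} (hp : 1 < p) (ψ : ℝ → ℝ≥0∞) (hψ : Measurable ψ) :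
    (∫⁻ t in Set.Ioc (0:ℝ) 1, ψ t) ^ p
      ≤ (∫⁻ t in Set.Ioc (0:ℝ) 1, ENNReal.ofReal (t ^ (-θ * (p / (p-1))))) ^ (p-1)
        * ∫⁻ t in Set.Ioc (0:ℝ) 1, ENNReal.ofReal (t ^ (θ * p)) * (ψ t) ^ p := by
  have hp0 : (0:ℝ) < p := lt_trans zero_lt_one hp
  have hp1 : p - 1 ≠ 0 := ne_of_gt (sub_pos.2 hp)
  set q : ℝ := p / (p - 1) with hq
  have hq0 : (0:ℝ) < q := div_pos hp0 (sub_pos.2 hp)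
  have hpq : p.HolderConjugate q := Real.HolderConjugate.conjExponent hp
  set f : ℝ → ℝ≥0∞ := fun t => ENNReal.ofReal (t ^ θ) * ψ t with hfd
  set g : ℝ → ℝ≥0∞ := fun t => ENNReal.ofReal (t ^ (-θ)) with hgd
  have hfm : AEMeasurable f (volume.restrict (Set.Ioc (0:ℝ) 1)) :=
    (((measurable_id.pow_const θ).ennreal_ofReal).mul hψ).aemeasurable
  have hgm : AEMeasurable g (volume.restrict (Set.Ioc (0:ℝ) 1)) :=
    ((measurable_id.pow_const (-θ)).ennreal_ofReal).aemeasurable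
  have hmain := ENNReal.lintegral_mul_le_Lp_mul_Lq (volume.restrict (Set.Ioc (0:ℝ) 1)) hpq hfm hgm
  have e0 : ∫⁻ t in Set.Ioc (0:ℝ) 1, (f * g) t = ∫⁻ t in Set.Ioc (0:ℝ) 1, ψ t := by
    apply setLIntegral_congr_fun measurableSet_Ioc
    intro t ht
    show ENNReal.ofReal (t ^ θ) * ψ t * ENNReal.ofReal (t ^ (-θ)) = ψ t
    rw [mul_comm (ENNReal.ofReal (t ^ θ)) (ψ t), mul_assoc,
      ← ENNReal.ofReal_mul (Real.rpow_nonneg (le_of_lt ht.1) θ),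
      ← Real.rpow_add ht.1, add_neg_cancel, Real.rpow_zero, ENNReal.ofReal_one, mul_one]
  have e1 : ∫⁻ t in Set.Ioc (0:ℝ) 1, (f t) ^ p
      = ∫⁻ t in Set.Ioc (0:ℝ) 1, ENNReal.ofReal (t ^ (θ * p)) * (ψ t) ^ p := by
    apply setLIntegral_congr_fun measurableSet_Ioc
    intro t ht
    show (ENNReal.ofReal (t ^ θ) * ψ t) ^ p = _
    rw [ENNReal.mul_rpow_of_nonneg _ _ (le_of_lt hp0),
      ENNReal.ofReal_rpow_of_pos (Real.rpow_pos_of_pos ht.1 θ),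
      ← Real.rpow_mul (le_of_lt ht.1)]
  have e2 : ∫⁻ t in Set.Ioc (0:ℝ) 1, (g t) ^ q
      = ∫⁻ t in Set.Ioc (0:ℝ) 1, ENNReal.ofReal (t ^ (-θ * q)) := by
    apply setLIntegral_congr_fun measurableSet_Ioc
    intro t ht
    show (ENNReal.ofReal (t ^ (-θ))) ^ q = _
    rw [ENNReal.ofReal_rpow_of_pos (Real.rpow_pos_of_pos ht.1 (-θ)),
      ← Real.rpow_mul (le_of_lt ht.1)]
  rw [e0, e1, e2] at hmain
  have h2 := ENNReal.rpow_le_rpow hmain (le_of_lt hp0)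
  rw [ENNReal.mul_rpow_of_nonneg _ _ (le_of_lt hp0), ← ENNReal.rpow_mul, ← ENNReal.rpow_mul,
    one_div_mul_cancel (ne_of_gt hp0), ENNReal.rpow_one] at h2
  have hqp : 1 / q * p = p - 1 := by rw [hq]; field_simp
  rw [hqp] at h2
  calc (∫⁻ t in Set.Ioc (0:ℝ) 1, ψ t) ^ p
      ≤ (∫⁻ t in Set.Ioc (0:ℝ) 1, ENNReal.ofReal (t ^ (θ*p)) * (ψ t)^p)
        * (∫⁻ t in Set.Ioc (0:ℝ) 1, ENNReal.ofReal (t ^ (-θ * q))) ^ (p-1) := h2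
  _ = _ := by rw [mul_comm]

/-- Hardy inequality at a point (`r = 1` slice version): for `C¹` bounded functions vanishing
at the origin, the weighted `L_p`-norm with weight `‖z‖^{-s}` is controlled by the weighted
`L_p`-norm of the gradient with weight `‖z‖^{-s+1}`. -/
theorem stmt1 (d : ℕ) (hd : 1 ≤ d) (p s : ℝ) (hp : 1 ≤ p) (hs : s > (d : ℝ) / p) :
    ∃ c : ℝ, 0 < c ∧
      ∀ g : EuclideanSpace ℝ (Fin d) → ℂ,
        ContDiff ℝ 1 g →
        (∃ C : ℝ, ∀ z, ‖g z‖ ≤ C ∧ ‖fderiv ℝ g z‖ ≤ C) →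
        g 0 = 0 →
        (∫⁻ z, ENNReal.ofReal ‖z‖ ^ (-s * p) * ENNReal.ofReal ‖g z‖ ^ p) ≤
          ENNReal.ofReal c *
            ∫⁻ z, ENNReal.ofReal ‖z‖ ^ ((-s + 1) * p) *
              ∑ j, ENNReal.ofReal ‖fderiv ℝ g z (EuclideanSpace.single j 1)‖ ^ p := by
  have hp0 : (0:ℝ) < p := lt_of_lt_of_le zero_lt_one hp
  have hd0R : (0:ℝ) < d := by exact_mod_cast hd
  haveI : Nonempty (Fin d) := ⟨⟨0, hd⟩⟩
  -- choice of θ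
  set θ : ℝ := (((d:ℝ)/p + 1 - s - 1/p) + (1 - 1/p)) / 2 with hθdef
  have hLU : (d:ℝ)/p + 1 - s - 1/p < 1 - 1/p := by linarith
  have hθU : θ < 1 - 1/p := by rw [hθdef]; linarith
  have hθL : (d:ℝ)/p + 1 - s - 1/p < θ := by rw [hθdef]; linarith
  set e : ℝ := θ*p + (s-1)*p - (d:ℝ) with hedef
  have he : -1 < e := by
    have h1 : ((d:ℝ)/p + 1 - s - 1/p)*p = d + p - s*p - 1 := by field_simp
    have h2 := mul_lt_mul_of_pos_right hθL hp0
    rw [h1] at h2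
    rw [hedef]; nlinarith
  -- the Hölder constant
  set K : ℝ≥0∞ := if p = 1 then 1
    else (∫⁻ t in Set.Ioc (0:ℝ) 1, ENNReal.ofReal (t ^ (-θ * (p/(p-1))))) ^ (p-1) with hKdef
  have hKt : K ≠ ⊤ := by
    rw [hKdef]
    split_ifs with h1
    · exact one_ne_top
    · have hp1 : 1 < p := lt_of_le_of_ne hp (Ne.symm h1)
      have hq0 : (0:ℝ) < p/(p-1) := div_pos hp0 (by linarith)
      have hexp : -1 < -θ * (p/(p-1)) := by
        rcases le_or_gt θ 0 with hθ0 | hθ0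
        · have : 0 ≤ -θ * (p/(p-1)) := mul_nonneg (by linarith) (le_of_lt hq0)
          linarith
        · have hθq : θ * (p/(p-1)) < 1 := by
            have h1q : 1 - 1/p = 1 / (p/(p-1)) := by
              rw [one_div_div]
              field_simp
            have := hθU
            rw [h1q] at this
            calc θ * (p/(p-1)) < (1/(p/(p-1))) * (p/(p-1)) :=
                mul_lt_mul_of_pos_right this hq0
            _ = 1 := one_div_mul_cancel (ne_of_gt hq0)
          nlinarith
      exact ENNReal.rpow_ne_top_of_nonneg (by linarith) (ne_of_lt (rpow_Ioc_lt_top hexp))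
  set Dc : ℝ≥0∞ := (d : ℝ≥0∞) ^ (p - 1) with hDcdef
  have hDct : Dc ≠ ⊤ := ENNReal.rpow_ne_top_of_nonneg (by linarith) (natCast_ne_top d)
  set Ie : ℝ≥0∞ := ∫⁻ t in Set.Ioc (0:ℝ) 1, ENNReal.ofReal (t ^ e) with hIedef
  have hIet : Ie ≠ ⊤ := ne_of_lt (rpow_Ioc_lt_top he)
  set κ : ℝ≥0∞ := K * Dc * Ie with hκdef
  have hκt : κ ≠ ⊤ := by
    rw [hκdef]; exact ENNReal.mul_ne_top (ENNReal.mul_ne_top hKt hDct) hIet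
  refine ⟨κ.toReal + 1, by positivity, ?_⟩
  intro g hg _ hg0
  have hκc : κ ≤ ENNReal.ofReal (κ.toReal + 1) := by
    conv_lhs => rw [← ENNReal.ofReal_toReal hκt]
    exact ENNReal.ofReal_le_ofReal (by linarith)
  -- notation
  set F : EuclideanSpace ℝ (Fin d) → ℝ :=
    fun w => ∑ j, ‖fderiv ℝ g w (EuclideanSpace.single j 1)‖ with hFdef
  set Φ : EuclideanSpace ℝ (Fin d) → ℝ≥0∞ :=
    fun w => ∑ j, ENNReal.ofReal ‖fderiv ℝ g w (EuclideanSpace.single j 1)‖ ^ p with hΦdef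
  have hfc : Continuous (fderiv ℝ g) := hg.continuous_fderiv one_ne_zero
  have hFc : Continuous F := by
    apply continuous_finset_sum
    intro j _
    exact ((ContinuousLinearMap.apply ℝ ℂ (EuclideanSpace.single j 1)).continuous.comp hfc).norm
  have hΦm : Measurable Φ := by
    apply Finset.measurable_sum
    intro j _
    exact (((ContinuousLinearMap.apply ℝ ℂ
      (EuclideanSpace.single j 1)).continuous.comp hfc).norm.measurable.ennreal_ofReal).pow_const p
  have hFpt : ∀ w, ENNReal.ofReal (F w) ^ p ≤ Dc * Φ w := by
    intro w
    rw [hFdef]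
    rw [ENNReal.ofReal_sum_of_nonneg (fun j _ => norm_nonneg _)]
    exact sum_rpow_le (by omega) hp _ (fun j => ofReal_ne_top)
  -- the J functional
  set J : EuclideanSpace ℝ (Fin d) → ℝ≥0∞ :=
    fun z => ∫⁻ t in Set.Ioc (0:ℝ) 1, ENNReal.ofReal (F (t • z)) with hJdef
  have hJ : ∀ z, ENNReal.ofReal ‖g z‖ ≤ ENNReal.ofReal ‖z‖ * J z := by
    intro z
    have h1 := ftc_bound g hg hg0 z
    have hIntF : IntegrableOn (fun t : ℝ => F (t • z)) (Set.Ioc (0:ℝ) 1) volume :=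
      (hFc.comp (continuous_id.smul continuous_const)).integrableOn_Ioc
    have h2 : ENNReal.ofReal (∫ t in (0:ℝ)..1, F (t • z)) = J z := by
      rw [intervalIntegral.integral_of_le zero_le_one, hJdef]
      exact ofReal_integral_eq_lintegral_ofReal hIntF
        (Filter.Eventually.of_forall fun t => Finset.sum_nonneg fun j _ => norm_nonneg _)
    calc ENNReal.ofReal ‖g z‖ ≤ ENNReal.ofReal (‖z‖ * ∫ t in (0:ℝ)..1, F (t • z)) := by
          apply ENNReal.ofReal_le_ofReal
          simpa [hFdef] using h1
    _ = ENNReal.ofReal ‖z‖ * J z := by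
        rw [ENNReal.ofReal_mul (norm_nonneg z), h2]
  -- the key pointwise bound, for z ≠ 0
  have hkey : ∀ z : EuclideanSpace ℝ (Fin d), z ≠ 0 →
      ENNReal.ofReal ‖z‖ ^ (-s * p) * ENNReal.ofReal ‖g z‖ ^ p
        ≤ (K * Dc) * (ENNReal.ofReal ‖z‖ ^ ((-s + 1) * p) *
            ∫⁻ t in Set.Ioc (0:ℝ) 1, ENNReal.ofReal (t ^ (θ*p)) * Φ (t • z)) := by
    intro z hz
    have hz0 : (0:ℝ) < ‖z‖ := norm_pos_iff.2 hz
    have hN0 : ENNReal.ofReal ‖z‖ ≠ 0 := (ENNReal.ofReal_pos.2 hz0).ne'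
    have hNt : ENNReal.ofReal ‖z‖ ≠ ⊤ := ofReal_ne_top
    -- step 1
    have s1 : ENNReal.ofReal ‖z‖ ^ (-s * p) * ENNReal.ofReal ‖g z‖ ^ p
        ≤ ENNReal.ofReal ‖z‖ ^ ((-s + 1) * p) * (J z) ^ p := by
      have h1 : ENNReal.ofReal ‖g z‖ ^ p ≤ (ENNReal.ofReal ‖z‖ * J z) ^ p :=
        ENNReal.rpow_le_rpow (hJ z) (le_of_lt hp0)
      calc ENNReal.ofReal ‖z‖ ^ (-s * p) * ENNReal.ofReal ‖g z‖ ^ p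
          ≤ ENNReal.ofReal ‖z‖ ^ (-s * p) * (ENNReal.ofReal ‖z‖ * J z) ^ p :=
            mul_le_mul_right h1 _
      _ = ENNReal.ofReal ‖z‖ ^ ((-s + 1) * p) * (J z) ^ p := by
          rw [ENNReal.mul_rpow_of_nonneg _ _ (le_of_lt hp0), ← mul_assoc,
            ← ENNReal.rpow_add _ _ hN0 hNt]
          ring_nf
    -- step 2 : Hölder
    have hψm : Measurable fun t : ℝ => ENNReal.ofReal (F (t • z)) :=
      ((hFc.comp (continuous_id.smul continuous_const)).measurable).ennreal_ofReal
    have s2 : (J z) ^ p ≤ K * ∫⁻ t in Set.Ioc (0:ℝ) 1,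
        ENNReal.ofReal (t ^ (θ*p)) * (ENNReal.ofReal (F (t • z))) ^ p := by
      rw [hKdef]
      split_ifs with h1
      · subst h1
        simp only [one_mul, ENNReal.rpow_one]
        rw [hJdef]
        apply lintegral_mono_ae
        filter_upwards [self_mem_ae_restrict (measurableSet_Ioc :
          MeasurableSet (Set.Ioc (0:ℝ) 1))] with t ht
        have hθ0 : θ < 0 := by simpa using hθU
        have h2 : (1:ℝ) ≤ t ^ (θ * 1) := by
          rw [mul_one]
          calc (1:ℝ) = t ^ (0:ℝ) := by rw [Real.rpow_zero]
          _ ≤ t ^ θ := Real.rpow_le_rpow_of_exponent_ge ht.1 ht.2 (le_of_lt hθ0)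
        calc ENNReal.ofReal (F (t • z))
            = 1 * ENNReal.ofReal (F (t • z)) := by rw [one_mul]
        _ ≤ ENNReal.ofReal (t ^ (θ*1)) * ENNReal.ofReal (F (t • z)) := by
            apply mul_le_mul_left
            simpa using ENNReal.ofReal_le_ofReal h2
      · exact holder_step (lt_of_le_of_ne hp (Ne.symm h1)) _ hψm
    -- step 3 : sum bound
    have s3 : (∫⁻ t in Set.Ioc (0:ℝ) 1,
          ENNReal.ofReal (t ^ (θ*p)) * (ENNReal.ofReal (F (t • z))) ^ p)
        ≤ Dc * ∫⁻ t in Set.Ioc (0:ℝ) 1, ENNReal.ofReal (t ^ (θ*p)) * Φ (t • z) := by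
      rw [← lintegral_const_mul' _ _ hDct]
      apply lintegral_mono
      intro t
      calc ENNReal.ofReal (t ^ (θ*p)) * (ENNReal.ofReal (F (t • z))) ^ p
          ≤ ENNReal.ofReal (t ^ (θ*p)) * (Dc * Φ (t • z)) := mul_le_mul_right (hFpt _) _
      _ = Dc * (ENNReal.ofReal (t ^ (θ*p)) * Φ (t • z)) := by ring
    calc ENNReal.ofReal ‖z‖ ^ (-s * p) * ENNReal.ofReal ‖g z‖ ^ p
        ≤ ENNReal.ofReal ‖z‖ ^ ((-s + 1) * p) * (J z) ^ p := s1
    _ ≤ ENNReal.ofReal ‖z‖ ^ ((-s + 1) * p) * (K * (Dc * ∫⁻ t in Set.Ioc (0:ℝ) 1,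
          ENNReal.ofReal (t ^ (θ*p)) * Φ (t • z))) :=
        mul_le_mul_right (le_trans s2 (mul_le_mul_right s3 K)) _
    _ = (K * Dc) * (ENNReal.ofReal ‖z‖ ^ ((-s + 1) * p) *
          ∫⁻ t in Set.Ioc (0:ℝ) 1, ENNReal.ofReal (t ^ (θ*p)) * Φ (t • z)) := by ring
  -- a.e. nonzero
  haveI : Nontrivial (EuclideanSpace ℝ (Fin d)) := by
    refine nontrivial_of_ne (EuclideanSpace.single (⟨0, hd⟩ : Fin d) (1:ℝ)) 0 ?_
    intro h
    have := congrArg norm h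
    rw [EuclideanSpace.norm_single] at this
    simp at this
  have h0ae : ∀ᵐ (z : EuclideanSpace ℝ (Fin d)), z ≠ (0 : EuclideanSpace ℝ (Fin d)) := by
    rw [ae_iff]
    have : {z : EuclideanSpace ℝ (Fin d) | ¬ z ≠ 0} = {0} := by
      ext w; simp
    rw [this]
    exact measure_singleton 0
  -- measurability facts
  have hTm : Measurable fun t : ℝ => ENNReal.ofReal (t ^ (θ*p)) :=
    (measurable_id.pow_const (θ*p)).ennreal_ofReal
  have hW2m : Measurable fun z : EuclideanSpace ℝ (Fin d) =>
      (ENNReal.ofReal ‖z‖) ^ ((-s + 1) * p) :=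
    (continuous_norm.measurable.ennreal_ofReal).pow_const _
  have hinner : ∀ z : EuclideanSpace ℝ (Fin d),
      Measurable fun t : ℝ => ENNReal.ofReal (t ^ (θ*p)) * Φ (t • z) :=
    fun z => hTm.mul (hΦm.comp (measurable_id.smul_const z))
  have huncurry : Measurable (Function.uncurry fun (z : EuclideanSpace ℝ (Fin d)) (t : ℝ) =>
      (ENNReal.ofReal ‖z‖) ^ ((-s + 1) * p) * (ENNReal.ofReal (t ^ (θ*p)) * Φ (t • z))) := by
    apply Measurable.mul
    · exact hW2m.comp measurable_fst
    · apply Measurable.mul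
      · exact hTm.comp measurable_snd
      · exact hΦm.comp (continuous_snd.smul continuous_fst).measurable
  set A : ℝ≥0∞ := ∫⁻ w, (ENNReal.ofReal ‖w‖) ^ ((-s + 1) * p) * Φ w with hAdef
  calc (∫⁻ z, ENNReal.ofReal ‖z‖ ^ (-s * p) * ENNReal.ofReal ‖g z‖ ^ p)
      ≤ ∫⁻ z, (K * Dc) * ((ENNReal.ofReal ‖z‖) ^ ((-s + 1) * p) *
          ∫⁻ t in Set.Ioc (0:ℝ) 1, ENNReal.ofReal (t ^ (θ*p)) * Φ (t • z)) :=
        lintegral_mono_ae (h0ae.mono fun z hz => hkey z hz)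
  _ = (K * Dc) * ∫⁻ z, (ENNReal.ofReal ‖z‖) ^ ((-s + 1) * p) *
          ∫⁻ t in Set.Ioc (0:ℝ) 1, ENNReal.ofReal (t ^ (θ*p)) * Φ (t • z) :=
        lintegral_const_mul' _ _ (ENNReal.mul_ne_top hKt hDct)
  _ = (K * Dc) * ∫⁻ z, ∫⁻ t in Set.Ioc (0:ℝ) 1,
          (ENNReal.ofReal ‖z‖) ^ ((-s + 1) * p) * (ENNReal.ofReal (t ^ (θ*p)) * Φ (t • z)) := by
        congr 1
        apply lintegral_congr
        intro z
        exact (lintegral_const_mul _ (hinner z)).symm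
  _ = (K * Dc) * ∫⁻ t in Set.Ioc (0:ℝ) 1, ∫⁻ z,
          (ENNReal.ofReal ‖z‖) ^ ((-s + 1) * p) * (ENNReal.ofReal (t ^ (θ*p)) * Φ (t • z)) := by
        rw [lintegral_lintegral_swap huncurry.aemeasurable]
  _ = (K * Dc) * ∫⁻ t in Set.Ioc (0:ℝ) 1, ENNReal.ofReal (t ^ e) * A := by
        congr 1
        apply setLIntegral_congr_fun measurableSet_Ioc
        intro t ht
        have e1 : ∀ z : EuclideanSpace ℝ (Fin d),
            (ENNReal.ofReal ‖z‖) ^ ((-s + 1) * p) * (ENNReal.ofReal (t ^ (θ*p)) * Φ (t • z))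
              = ENNReal.ofReal (t ^ (θ*p)) *
                ((ENNReal.ofReal ‖z‖) ^ ((-s + 1) * p) * Φ (t • z)) := fun z => by ring
        simp only [e1]
        rw [lintegral_const_mul' _ _ ofReal_ne_top,
          scale_step Φ hΦm ((-s + 1) * p) ht.1, ← mul_assoc,
          ← ENNReal.ofReal_mul (Real.rpow_nonneg (le_of_lt ht.1) _),
          ← Real.rpow_add ht.1]
        congr 2
        rw [hedef]
        ring
  _ = (K * Dc) * (Ie * A) := by
        congr 1
        rw [hIedef]
        exact lintegral_mul_const _ ((measurable_id.pow_const e).ennreal_ofReal)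
  _ = κ * A := by rw [hκdef]; ring
  _ ≤ ENNReal.ofReal (κ.toReal + 1) * A := mul_le_mul_left hκc A
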